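/- Let q be a power of a prime p, let n ≥ 2, and let r be an integer with ⌈n/2⌉ ≤ r ≤ n-1, gcd(n,r) = 1, and n ≠ 2r, and set s := 2r - n + 1 (so s ≥ 2). Then the sequence (q^{s}, q^{r}+q^{s-1}, q^{r+1}+q, q^{r+s-1}+1) of positive integers is telescopic; consequently the numerical semigroup it generates is symmetric and has exactly q^r(q^{s}-1)/2 gaps. -/

import Mathlib

set_option maxHeartbeats 1000000

/-- `seqGcd a i = d_i = gcd(a_1, …, a_i)` (so `seqGcd a 0 = 0`). -/
def seqGcd (a : ℕ → ℕ) (i : ℕ) : ℕ := Finset.gcd (Finset.Icc 1 i) a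

/-- `seqSemigroup a i = S_i`, the submonoid of `ℕ` generated by `{a_1/d_i, …, a_i/d_i}`. -/
def seqSemigroup (a : ℕ → ℕ) (i : ℕ) : AddSubmonoid ℕ :=
  AddSubmonoid.closure ((fun j => a j / seqGcd a i) '' Set.Icc 1 i)

/-- The sequence `(a_1, …, a_m)` of positive integers with `gcd = 1` is telescopic. -/
def IsTelescopic (a : ℕ → ℕ) (m : ℕ) : Prop :=
  (∀ i, 1 ≤ i → i ≤ m → 0 < a i) ∧ seqGcd a m = 1 ∧
  ∀ i, 2 ≤ i → i ≤ m → a i / seqGcd a i ∈ seqSemigroup a (i - 1)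


private lemma digit_cancel {Q c c' K : ℤ} (h0 : 0 ≤ c) (hc : c < Q) (h0' : 0 ≤ c')
    (hc' : c' < Q) (h : c = c' + Q * K) : c = c' ∧ K = 0 := by
  have hQ : 0 < Q := lt_of_le_of_lt h0 hc
  have h1 : K < 1 := by nlinarith
  have h2 : -1 < K := by nlinarith
  have : K = 0 := by omega
  subst this
  constructor <;> omega

private lemma digits_unique (q t u : ℕ) (hq : 2 ≤ q) {c1 c2 c3 c4 c1' c2' c3' c4' : ℤ}
    (h2 : 0 ≤ c2) (h2' : c2 < q) (h3 : 0 ≤ c3) (h3' : c3 < (q:ℤ)^t) (h4 : 0 ≤ c4) (h4' : c4 < q)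
    (k2 : 0 ≤ c2') (k2' : c2' < q) (k3 : 0 ≤ c3') (k3' : c3' < (q:ℤ)^t) (k4 : 0 ≤ c4') (k4' : c4' < q)
    (h : c1*(q:ℤ)^(t+2) + c2*((q:ℤ)^(t+2+u)+(q:ℤ)^(t+1)) + c3*((q:ℤ)^(t+3+u)+q)
          + c4*((q:ℤ)^(2*t+u+3)+1)
       = c1'*(q:ℤ)^(t+2) + c2'*((q:ℤ)^(t+2+u)+(q:ℤ)^(t+1)) + c3'*((q:ℤ)^(t+3+u)+q)
          + c4'*((q:ℤ)^(2*t+u+3)+1)) :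
    c1 = c1' ∧ c2 = c2' ∧ c3 = c3' ∧ c4 = c4' := by
  have hq0 : (q:ℤ) ≠ 0 := by positivity
  have hqt0 : ((q:ℤ)^t) ≠ 0 := by positivity
  -- stage 4
  have e4 : c4 = c4' + (q:ℤ) * ((c1'-c1)*(q:ℤ)^(t+1) + (c2'-c2)*((q:ℤ)^(t+1+u)+(q:ℤ)^t)
      + (c3'-c3)*((q:ℤ)^(t+2+u)+1) + (c4'-c4)*(q:ℤ)^(2*t+u+2)) := by
    linear_combination h
  obtain ⟨hc4, -⟩ := digit_cancel h4 h4' k4 k4' e4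
  have h2eq : c1*(q:ℤ)^(t+1) + c2*((q:ℤ)^(t+1+u)+(q:ℤ)^t) + c3*((q:ℤ)^(t+2+u)+1)
      = c1'*(q:ℤ)^(t+1) + c2'*((q:ℤ)^(t+1+u)+(q:ℤ)^t) + c3'*((q:ℤ)^(t+2+u)+1) := by
    apply mul_left_cancel₀ hq0
    linear_combination h - ((q:ℤ)^(2*t+u+3)+1) * hc4
  -- stage 3
  have e3 : c3 = c3' + (q:ℤ)^t * ((c1'-c1)*(q:ℤ) + (c2'-c2)*((q:ℤ)^(u+1)+1)
      + (c3'-c3)*(q:ℤ)^(u+2)) := by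
    linear_combination h2eq
  obtain ⟨hc3, -⟩ := digit_cancel h3 h3' k3 k3' e3
  have h3eq : c1*(q:ℤ) + c2*((q:ℤ)^(u+1)+1) = c1'*(q:ℤ) + c2'*((q:ℤ)^(u+1)+1) := by
    apply mul_left_cancel₀ hqt0
    linear_combination h2eq - ((q:ℤ)^(t+2+u)+1) * hc3
  -- stage 2
  have e2 : c2 = c2' + (q:ℤ) * ((c1'-c1) + (c2'-c2)*(q:ℤ)^u) := by
    linear_combination h3eq
  obtain ⟨hc2, -⟩ := digit_cancel h2 h2' k2 k2' e2
  have hc1 : c1 = c1' := by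
    apply mul_left_cancel₀ hq0
    linear_combination h3eq - ((q:ℤ)^(u+1)+1) * hc2 - c1 * (mul_comm (q:ℤ) c1) + c1' * (mul_comm (q:ℤ) c1')
  exact ⟨hc1, hc2, hc3, hc4⟩

private lemma digits_exist (q t u : ℕ) (hq : 2 ≤ q) (x : ℤ) :
    ∃ c1 c2 c3 c4 : ℤ, 0 ≤ c2 ∧ c2 < q ∧ 0 ≤ c3 ∧ c3 < (q:ℤ)^t ∧ 0 ≤ c4 ∧ c4 < q ∧
      x = c1*(q:ℤ)^(t+2) + c2*((q:ℤ)^(t+2+u)+(q:ℤ)^(t+1)) + c3*((q:ℤ)^(t+3+u)+q)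
          + c4*((q:ℤ)^(2*t+u+3)+1) := by
  have hq0 : (q:ℤ) ≠ 0 := by positivity
  have hqp : (0:ℤ) < q := by positivity
  have hqtp : (0:ℤ) < (q:ℤ)^t := by positivity
  set c4 := x % q with hc4def
  set y := x / q - c4 * (q:ℤ)^(2*t+u+2) with hydef
  set c3 := y % (q:ℤ)^t with hc3def
  set z := y / (q:ℤ)^t - c3 * (q:ℤ)^(u+2) with hzdef
  set c2 := z % q with hc2def
  set c1 := z / q - c2 * (q:ℤ)^u with hc1def
  have h4 : x = c4*((q:ℤ)^(2*t+u+3)+1) + (q:ℤ)*y := by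
    rw [hydef, hc4def]; linear_combination -(Int.emod_add_mul_ediv x q)
  have h3 : y = c3*((q:ℤ)^(t+2+u)+1) + (q:ℤ)^t*z := by
    rw [hzdef, hc3def]; linear_combination -(Int.emod_add_mul_ediv y ((q:ℤ)^t))
  have h2 : z = c2*((q:ℤ)^(u+1)+1) + (q:ℤ)*c1 := by
    rw [hc1def, hc2def]; linear_combination -(Int.emod_add_mul_ediv z q)
  refine ⟨c1, c2, c3, c4, Int.emod_nonneg z hq0, Int.emod_lt_of_pos z hqp,
    Int.emod_nonneg y (by positivity), Int.emod_lt_of_pos y hqtp,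
    Int.emod_nonneg x hq0, Int.emod_lt_of_pos x hqp, ?_⟩
  linear_combination h4 + (q:ℤ)*h3 + (q:ℤ)^(t+1)*h2

private def wGens (q t u : ℕ) : Set ℕ :=
  {q^(t+2), q^(t+2+u)+q^(t+1), q^(t+3+u)+q, q^(2*t+u+3)+1}

private def wS (q t u : ℕ) : AddSubmonoid ℕ := AddSubmonoid.closure (wGens q t u)

private lemma wid2 (q t u : ℕ) :
    q * (q^(t+2+u)+q^(t+1)) = (q^(u+1)+1) * q^(t+2) := by ring

private lemma wid3 (q t u : ℕ) (hq : 2 ≤ q) :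
    q^t * (q^(t+3+u)+q) = (q^u*(q^(t+1)-1)) * q^(t+2) + (q^(t+2+u)+q^(t+1)) := by
  have h1 : 1 ≤ q^(t+1) := Nat.one_le_pow _ _ (by omega)
  zify [h1]; ring

private lemma wid4 (q t u : ℕ) (hq : 2 ≤ q) :
    q * (q^(2*t+u+3)+1) = (q^(u+1)*(q^(t+1)-1)) * q^(t+2) + (q^(t+3+u)+q) := by
  have h1 : 1 ≤ q^(t+1) := Nat.one_le_pow _ _ (by omega)
  zify [h1]; ring

private lemma nf_mem (q t u : ℕ) (hq : 2 ≤ q) (b1 b2 b3 b4 : ℕ) :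
    ∃ c1 c2 c3 c4 : ℕ, c2 < q ∧ c3 < q^t ∧ c4 < q ∧
      b1*(q^(t+2)) + b2*(q^(t+2+u)+q^(t+1)) + b3*(q^(t+3+u)+q) + b4*(q^(2*t+u+3)+1)
        = c1*(q^(t+2)) + c2*(q^(t+2+u)+q^(t+1)) + c3*(q^(t+3+u)+q) + c4*(q^(2*t+u+3)+1) := by
  have hqp : 0 < q := by omega
  have hqtp : 0 < q^t := Nat.pow_pos hqp
  have red4 : b1*(q^(t+2)) + b2*(q^(t+2+u)+q^(t+1)) + b3*(q^(t+3+u)+q) + b4*(q^(2*t+u+3)+1)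
      = (b1+(b4/q)*(q^(u+1)*(q^(t+1)-1)))*(q^(t+2)) + b2*(q^(t+2+u)+q^(t+1))
        + (b3+b4/q)*(q^(t+3+u)+q) + (b4%q)*(q^(2*t+u+3)+1) := by
    calc b1*(q^(t+2)) + b2*(q^(t+2+u)+q^(t+1)) + b3*(q^(t+3+u)+q) + b4*(q^(2*t+u+3)+1)
        = b1*(q^(t+2)) + b2*(q^(t+2+u)+q^(t+1)) + b3*(q^(t+3+u)+q)
          + (b4/q)*(q*(q^(2*t+u+3)+1)) + (b4%q)*(q^(2*t+u+3)+1) := by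
          conv_lhs => rw [← Nat.div_add_mod b4 q]
          ring
      _ = _ := by rw [wid4 q t u hq]; ring
  set b3' := b3 + b4/q with hb3'
  have red3 : (b1+(b4/q)*(q^(u+1)*(q^(t+1)-1)))*(q^(t+2)) + b2*(q^(t+2+u)+q^(t+1))
        + b3'*(q^(t+3+u)+q) + (b4%q)*(q^(2*t+u+3)+1)
      = (b1+(b4/q)*(q^(u+1)*(q^(t+1)-1))+(b3'/q^t)*(q^u*(q^(t+1)-1)))*(q^(t+2))
        + (b2+b3'/q^t)*(q^(t+2+u)+q^(t+1))
        + (b3'%q^t)*(q^(t+3+u)+q) + (b4%q)*(q^(2*t+u+3)+1) := by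
    calc (b1+(b4/q)*(q^(u+1)*(q^(t+1)-1)))*(q^(t+2)) + b2*(q^(t+2+u)+q^(t+1))
        + b3'*(q^(t+3+u)+q) + (b4%q)*(q^(2*t+u+3)+1)
        = (b1+(b4/q)*(q^(u+1)*(q^(t+1)-1)))*(q^(t+2)) + b2*(q^(t+2+u)+q^(t+1))
          + (b3'/q^t)*(q^t*(q^(t+3+u)+q)) + (b3'%q^t)*(q^(t+3+u)+q)
          + (b4%q)*(q^(2*t+u+3)+1) := by
          conv_lhs => rw [← Nat.div_add_mod b3' (q^t)]
          ring
      _ = _ := by rw [wid3 q t u hq]; ring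
  set b2' := b2 + b3'/q^t with hb2'
  have red2 : (b1+(b4/q)*(q^(u+1)*(q^(t+1)-1))+(b3'/q^t)*(q^u*(q^(t+1)-1)))*(q^(t+2))
        + b2'*(q^(t+2+u)+q^(t+1)) + (b3'%q^t)*(q^(t+3+u)+q) + (b4%q)*(q^(2*t+u+3)+1)
      = (b1+(b4/q)*(q^(u+1)*(q^(t+1)-1))+(b3'/q^t)*(q^u*(q^(t+1)-1))+(b2'/q)*(q^(u+1)+1))*(q^(t+2))
        + (b2'%q)*(q^(t+2+u)+q^(t+1)) + (b3'%q^t)*(q^(t+3+u)+q) + (b4%q)*(q^(2*t+u+3)+1) := by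
    calc (b1+(b4/q)*(q^(u+1)*(q^(t+1)-1))+(b3'/q^t)*(q^u*(q^(t+1)-1)))*(q^(t+2))
        + b2'*(q^(t+2+u)+q^(t+1)) + (b3'%q^t)*(q^(t+3+u)+q) + (b4%q)*(q^(2*t+u+3)+1)
        = (b1+(b4/q)*(q^(u+1)*(q^(t+1)-1))+(b3'/q^t)*(q^u*(q^(t+1)-1)))*(q^(t+2))
          + (b2'/q)*(q*(q^(t+2+u)+q^(t+1))) + (b2'%q)*(q^(t+2+u)+q^(t+1))
          + (b3'%q^t)*(q^(t+3+u)+q) + (b4%q)*(q^(2*t+u+3)+1) := by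
          conv_lhs => rw [← Nat.div_add_mod b2' q]
          ring
      _ = _ := by rw [wid2 q t u]; ring
  exact ⟨b1+(b4/q)*(q^(u+1)*(q^(t+1)-1))+(b3'/q^t)*(q^u*(q^(t+1)-1))+(b2'/q)*(q^(u+1)+1),
    b2'%q, b3'%q^t, b4%q, Nat.mod_lt _ hqp, Nat.mod_lt _ hqtp, Nat.mod_lt _ hqp,
    by rw [red4, red3, red2]⟩

private lemma wS_mem_iff (q t u : ℕ) (hq : 2 ≤ q) (x : ℕ) :
    x ∈ wS q t u ↔ ∃ c1 c2 c3 c4 : ℕ, c2 < q ∧ c3 < q^t ∧ c4 < q ∧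
      x = c1*(q^(t+2)) + c2*(q^(t+2+u)+q^(t+1)) + c3*(q^(t+3+u)+q) + c4*(q^(2*t+u+3)+1) := by
  constructor
  · intro hx
    induction hx using AddSubmonoid.closure_induction with
    | mem y hy =>
      rcases hy with h | h | h | h
      · exact ⟨1, 0, 0, 0, by omega, Nat.pow_pos (by omega), by omega, by subst h; ring⟩
      · obtain ⟨c1, c2, c3, c4, e2, e3, e4, he⟩ := nf_mem q t u hq 0 1 0 0
        exact ⟨c1, c2, c3, c4, e2, e3, e4, by subst h; rw [← he]; ring⟩
      · obtain ⟨c1, c2, c3, c4, e2, e3, e4, he⟩ := nf_mem q t u hq 0 0 1 0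
        exact ⟨c1, c2, c3, c4, e2, e3, e4, by rw [h, ← he]; ring⟩
      · obtain ⟨c1, c2, c3, c4, e2, e3, e4, he⟩ := nf_mem q t u hq 0 0 0 1
        exact ⟨c1, c2, c3, c4, e2, e3, e4, by rw [h, ← he]; ring⟩
    | zero => exact ⟨0, 0, 0, 0, by omega, Nat.pow_pos (by omega), by omega, by ring⟩
    | add y z hy hz ihy ihz =>
      obtain ⟨c1, c2, c3, c4, e2, e3, e4, he⟩ := ihy
      obtain ⟨d1, d2, d3, d4, f2, f3, f4, hf⟩ := ihz
      obtain ⟨g1, g2, g3, g4, m2, m3, m4, hg⟩ := nf_mem q t u hq (c1+d1) (c2+d2) (c3+d3) (c4+d4)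
      exact ⟨g1, g2, g3, g4, m2, m3, m4, by rw [he, hf, ← hg]; ring⟩
  · rintro ⟨c1, c2, c3, c4, -, -, -, rfl⟩
    have hmem : ∀ y ∈ wGens q t u, ∀ c : ℕ, c * y ∈ wS q t u := by
      intro y hy c
      simpa [nsmul_eq_mul] using (wS q t u).nsmul_mem (AddSubmonoid.subset_closure hy) c
    refine add_mem (add_mem (add_mem ?_ ?_) ?_) ?_
    · exact hmem _ (by left; rfl) c1
    · exact hmem _ (by right; left; rfl) c2
    · exact hmem _ (by right; right; left; rfl) c3
    · exact hmem _ (by right; right; right; rfl) c4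

private lemma wS_dichotomy (q t u : ℕ) (hq : 2 ≤ q) (x : ℕ) :
    ∃ c1 c2 c3 c4 : ℤ, 0 ≤ c2 ∧ c2 < q ∧ 0 ≤ c3 ∧ c3 < (q:ℤ)^t ∧ 0 ≤ c4 ∧ c4 < q ∧
      (x:ℤ) = c1*(q:ℤ)^(t+2) + c2*((q:ℤ)^(t+2+u)+(q:ℤ)^(t+1)) + c3*((q:ℤ)^(t+3+u)+q)
          + c4*((q:ℤ)^(2*t+u+3)+1) ∧
      (x ∈ wS q t u ↔ 0 ≤ c1) := by
  obtain ⟨c1, c2, c3, c4, h2, h2', h3, h3', h4, h4', hrep⟩ := digits_exist q t u hq (x:ℤ)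
  refine ⟨c1, c2, c3, c4, h2, h2', h3, h3', h4, h4', hrep, ?_⟩
  constructor
  · intro hx
    obtain ⟨n1, n2, n3, n4, f2, f3, f4, hf⟩ := (wS_mem_iff q t u hq x).1 hx
    have hfz : (x:ℤ) = (n1:ℤ)*(q:ℤ)^(t+2) + (n2:ℤ)*((q:ℤ)^(t+2+u)+(q:ℤ)^(t+1))
        + (n3:ℤ)*((q:ℤ)^(t+3+u)+q) + (n4:ℤ)*((q:ℤ)^(2*t+u+3)+1) := by
      exact_mod_cast congrArg (Nat.cast : ℕ → ℤ) hf
    have := digits_unique q t u hq h2 h2' h3 h3' h4 h4'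
      (by positivity) (by exact_mod_cast f2) (by positivity) (by exact_mod_cast f3)
      (by positivity) (by exact_mod_cast f4) (hrep.symm.trans hfz)
    rw [this.1]; positivity
  · intro hc1
    apply (wS_mem_iff q t u hq x).2
    refine ⟨c1.toNat, c2.toNat, c3.toNat, c4.toNat, ?_, ?_, ?_, ?_⟩
    · omega
    · have : ((q:ℤ)^t) = ((q^t : ℕ) : ℤ) := by push_cast; ring
      omega
    · omega
    · have : (x:ℤ) = ((c1.toNat*(q^(t+2)) + c2.toNat*(q^(t+2+u)+q^(t+1))
          + c3.toNat*(q^(t+3+u)+q) + c4.toNat*(q^(2*t+u+3)+1) : ℕ) : ℤ) := by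
        push_cast
        rw [Int.toNat_of_nonneg hc1, Int.toNat_of_nonneg h2, Int.toNat_of_nonneg h3,
          Int.toNat_of_nonneg h4]
        linarith [hrep]
      exact_mod_cast this

private lemma wS_main (q t u : ℕ) (hq : 2 ≤ q) :
    ∃ F : ℕ,
      (∀ x : ℕ, x ∉ wS q t u → x ≤ F) ∧ F ∉ wS q t u ∧
      2 * Set.ncard {x : ℕ | x ∉ wS q t u} = q^(t+2+u) * (q^(t+2) - 1) ∧
      F + 1 = q^(t+2+u) * (q^(t+2) - 1) := by
  classical
  have hqp : 0 < q := by omega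
  set M := q^(t+2+u) with hM
  set N := q^(t+2) with hN
  have hM1 : 1 ≤ M := Nat.one_le_pow _ _ hqp
  have hN4 : 4 ≤ N := by
    calc 4 = 2^2 := rfl
    _ ≤ q^2 := Nat.pow_le_pow_left hq 2
    _ ≤ q^(t+2) := Nat.pow_le_pow_right hqp (by omega)
  have hMN : M + 2 ≤ M * N := by nlinarith
  obtain ⟨F, hF⟩ : ∃ F : ℕ, M * N = F + 1 + M := ⟨M * N - 1 - M, by omega⟩
  have hFZ : (F:ℤ) = -(q:ℤ)^(t+2) + ((q:ℤ)-1)*((q:ℤ)^(t+2+u)+(q:ℤ)^(t+1))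
      + ((q:ℤ)^t-1)*((q:ℤ)^(t+3+u)+q) + ((q:ℤ)-1)*((q:ℤ)^(2*t+u+3)+1) := by
    have : ((M*N : ℕ) : ℤ) = ((F + 1 + M : ℕ) : ℤ) := by exact_mod_cast hF
    push_cast [hM, hN] at this
    linear_combination -this
  -- key symmetry step
  have key : ∀ x : ℕ, x ≤ F → ((F - x ∈ wS q t u) ↔ x ∉ wS q t u) := by
    intro x hx
    obtain ⟨c1, c2, c3, c4, h2, h2', h3, h3', h4, h4', hrep, hiff⟩ := wS_dichotomy q t u hq x
    obtain ⟨d1, d2, d3, d4, k2, k2', k3, k3', k4, k4', krep, kiff⟩ := wS_dichotomy q t u hq (F - x)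
    have hcast : ((F - x : ℕ) : ℤ) = (F:ℤ) - (x:ℤ) := by
      have := Nat.cast_sub hx (R := ℤ); exact this
    have hrep' : ((F - x : ℕ) : ℤ) = (-1-c1)*(q:ℤ)^(t+2)
        + ((q:ℤ)-1-c2)*((q:ℤ)^(t+2+u)+(q:ℤ)^(t+1))
        + ((q:ℤ)^t-1-c3)*((q:ℤ)^(t+3+u)+q) + ((q:ℤ)-1-c4)*((q:ℤ)^(2*t+u+3)+1) := by
      rw [hcast, hFZ, hrep]; ring
    have := digits_unique q t u hq k2 k2' k3 k3' k4 k4'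
      (by omega) (by omega) (by omega) (by omega) (by omega) (by omega)
      (krep.symm.trans hrep')
    rw [kiff, hiff, this.1]
    omega
  have hub : ∀ x : ℕ, x ∉ wS q t u → x ≤ F := by
    intro x hx
    obtain ⟨c1, c2, c3, c4, h2, h2', h3, h3', h4, h4', hrep, hiff⟩ := wS_dichotomy q t u hq x
    have hc1 : c1 ≤ -1 := by
      by_contra h
      exact hx (hiff.2 (by omega))
    have hxle : (x:ℤ) ≤ (F:ℤ) := by
      rw [hrep, hFZ]
      have b1 : (0:ℤ) < (q:ℤ)^(t+2) := by positivity
      have b2p : (0:ℤ) < ((q:ℤ)^(t+2+u)+(q:ℤ)^(t+1)) := by positivity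
      have b3p : (0:ℤ) < ((q:ℤ)^(t+3+u)+(q:ℤ)) := by positivity
      have b4p : (0:ℤ) < ((q:ℤ)^(2*t+u+3)+1) := by positivity
      have m1 : c1*(q:ℤ)^(t+2) ≤ (-1)*(q:ℤ)^(t+2) := by nlinarith
      have m2 : c2*((q:ℤ)^(t+2+u)+(q:ℤ)^(t+1)) ≤ ((q:ℤ)-1)*((q:ℤ)^(t+2+u)+(q:ℤ)^(t+1)) := by nlinarith
      have m3 : c3*((q:ℤ)^(t+3+u)+(q:ℤ)) ≤ ((q:ℤ)^t-1)*((q:ℤ)^(t+3+u)+(q:ℤ)) := by nlinarith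
      have m4 : c4*((q:ℤ)^(2*t+u+3)+1) ≤ ((q:ℤ)-1)*((q:ℤ)^(2*t+u+3)+1) := by nlinarith
      linarith
    exact_mod_cast hxle
  have hFnot : F ∉ wS q t u := by
    have h0 : (0:ℕ) ≤ F := Nat.zero_le _
    have := (key 0 h0)
    simp only [Nat.sub_zero] at this
    exact fun hF' => (this.1 hF') (AddSubmonoid.zero_mem _)
  -- counting
  set G' : Finset ℕ := (Finset.range (F+1)).filter (fun x => x ∉ wS q t u) with hG'
  set C' : Finset ℕ := (Finset.range (F+1)).filter (fun x => x ∈ wS q t u) with hC'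
  have hGset : {x : ℕ | x ∉ wS q t u} = ↑G' := by
    ext x
    simp only [hG', Finset.coe_filter, Finset.mem_range, Set.mem_setOf_eq]
    exact ⟨fun h => ⟨by have := hub x h; omega, h⟩, fun h => h.2⟩
  have hcard : G'.card = C'.card := by
    apply Finset.card_bij' (fun x _ => F - x) (fun x _ => F - x)
    · intro x hx
      simp only [hG', Finset.mem_filter, Finset.mem_range] at hx
      simp only [hC', Finset.mem_filter, Finset.mem_range]
      exact ⟨by omega, (key x (by omega)).2 hx.2⟩
    · intro x hx
      simp only [hC', Finset.mem_filter, Finset.mem_range] at hx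
      simp only [hG', Finset.mem_filter, Finset.mem_range]
      refine ⟨by omega, ?_⟩
      have hxle : x ≤ F := by omega
      have := key (F - x) (by omega)
      rw [Nat.sub_sub_self hxle] at this
      exact this.1 hx.2
    · intro x hx
      simp only [hG', Finset.mem_filter, Finset.mem_range] at hx
      omega
    · intro x hx
      simp only [hC', Finset.mem_filter, Finset.mem_range] at hx
      omega
  have hsum : C'.card + G'.card = F + 1 := by
    have := Finset.card_filter_add_card_filter_not
      (s := Finset.range (F+1)) (p := fun x => x ∈ wS q t u)
    simpa using this
  have hgoal : F + 1 = M * (N - 1) := by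
    have : M * (N - 1) = M * N - M := by
      rw [Nat.mul_sub]; omega
    omega
  refine ⟨F, hub, hFnot, ?_, hgoal⟩
  rw [hGset, Set.ncard_coe_finset]
  omega

private lemma wcop (q m : ℕ) (hq : 2 ≤ q) : Nat.Coprime q (m*q+1) := by
  have h1 : (m*q+1) % q = 1 := by
    rw [add_comm, Nat.add_mul_mod_self_right]
    exact Nat.mod_eq_of_lt (by omega)
  unfold Nat.Coprime
  rw [Nat.gcd_rec, h1, Nat.gcd_one_left]

private lemma mul_mem_closure {s : Set ℕ} {g : ℕ} (hg : g ∈ s) (c : ℕ) :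
    c * g ∈ AddSubmonoid.closure s := by
  simpa [nsmul_eq_mul] using (AddSubmonoid.closure s).nsmul_mem (AddSubmonoid.subset_closure hg) c

/-- Theorem 3.4 (`Teo HP`), case `s = 2r - n + 1`, `u = n - r - 1`: the sequence
`(q^s, q^r+q^{s-1}, q^{r+1}+q, q^{r+s-1}+1)` is telescopic; the numerical semigroup it
generates is symmetric with exactly `q^r(q^s-1)/2` gaps (stated as `2·g = q^r(q^s-1)`
and largest gap `= 2g-1`). -/
theorem weierstrass_semigroup_subcover_telescopic
    (p q e n r s : ℕ) (hp : p.Prime) (he : 0 < e) (hq : q = p ^ e)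
    (hn : 2 ≤ n) (hr1 : n ≤ 2 * r) (hr2 : r ≤ n - 1) (hgcd : Nat.gcd n r = 1)
    (hn2r : n ≠ 2 * r) (hs : s = 2 * r + 1 - n)
    (a : ℕ → ℕ)
    (ha1 : a 1 = q ^ s)
    (ha2 : a 2 = q ^ r + q ^ (s - 1))
    (ha3 : a 3 = q ^ (r + 1) + q)
    (ha4 : a 4 = q ^ (r + s - 1) + 1) :
    IsTelescopic a 4 ∧
    2 * Set.ncard {x : ℕ | x ∉ seqSemigroup a 4} = q ^ r * (q ^ s - 1) ∧
    ∃ l : ℕ, IsGreatest {x : ℕ | x ∉ seqSemigroup a 4} l ∧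
      l + 1 = 2 * Set.ncard {x : ℕ | x ∉ seqSemigroup a 4} := by
  have hq2 : 2 ≤ q := by
    subst hq
    exact Nat.one_lt_pow (by omega) hp.one_lt
  have hs2 : 2 ≤ s := by omega
  have hsr : s ≤ r := by omega
  obtain ⟨t, rfl⟩ : ∃ t, s = t + 2 := ⟨s - 2, by omega⟩
  obtain ⟨u, rfl⟩ : ∃ u, r = t + 2 + u := ⟨r - (t + 2), by omega⟩
  have e2 : t + 2 - 1 = t + 1 := by omega
  have e3 : t + 2 + u + 1 = t + 3 + u := by omega
  have e4 : t + 2 + u + (t + 2) - 1 = 2*t + u + 3 := by omega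
  rw [e2] at ha2
  rw [e3] at ha3
  rw [e4] at ha4
  clear hs hr1 hr2 hgcd hn2r hn hs2 hsr e2 e3 e4 hq hp he
  have hqp : 0 < q := by omega
  have hqt1p : 0 < q^(t+1) := Nat.pow_pos hqp
  -- gcd computations
  have m1 : (1:ℕ) ∈ Finset.Icc 1 4 := by simp
  have m4 : (4:ℕ) ∈ Finset.Icc 1 4 := by simp
  have hcop14 : Nat.Coprime (a 1) (a 4) := by
    rw [ha1, ha4]
    have : q^(2*t+u+3)+1 = q^(2*t+u+2)*q+1 := by ring
    rw [this]
    exact Nat.Coprime.pow_left _ (wcop q _ hq2)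
  have hd4 : seqGcd a 4 = 1 := by
    have h1 : seqGcd a 4 ∣ a 1 := Finset.gcd_dvd m1
    have h4 : seqGcd a 4 ∣ a 4 := Finset.gcd_dvd m4
    exact Nat.eq_one_of_dvd_coprimes hcop14 h1 h4
  have hd1 : seqGcd a 1 = q^(t+2) := by
    rw [seqGcd, Finset.Icc_self, Finset.gcd_singleton, ha1]
    simp
  have hd2 : seqGcd a 2 = q^(t+1) := by
    have hIcc : Finset.Icc 1 2 = {1, 2} := by decide
    apply Nat.dvd_antisymm
    · have h1 : seqGcd a 2 ∣ a 1 := Finset.gcd_dvd (by simp)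
      have h2 : seqGcd a 2 ∣ a 2 := Finset.gcd_dvd (by simp)
      have hg : Nat.gcd (a 1) (a 2) = q^(t+1) := by
        rw [ha1, ha2]
        have f1 : q^(t+2) = q^(t+1)*q := by ring
        have f2 : q^(t+2+u)+q^(t+1) = q^(t+1)*(q^(u+1)+1) := by ring
        rw [f1, f2, Nat.gcd_mul_left]
        have : q^(u+1)+1 = q^u*q+1 := by ring
        rw [this, wcop q _ hq2, mul_one]
      exact hg ▸ Nat.dvd_gcd h1 h2
    · apply Finset.dvd_gcd
      intro i hi
      rw [hIcc] at hi
      rcases Finset.mem_insert.1 hi with h | h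
      · subst h; rw [ha1]
        exact ⟨q, by ring⟩
      · rw [Finset.mem_singleton] at h; subst h; rw [ha2]
        exact ⟨q^(u+1)+1, by ring⟩
  have hd3 : seqGcd a 3 = q := by
    have hIcc : Finset.Icc 1 3 = {1, 2, 3} := by decide
    apply Nat.dvd_antisymm
    · have h1 : seqGcd a 3 ∣ a 1 := Finset.gcd_dvd (by simp)
      have h3 : seqGcd a 3 ∣ a 3 := Finset.gcd_dvd (by simp)
      have hg : Nat.gcd (a 1) (a 3) = q := by
        rw [ha1, ha3]
        have f1 : q^(t+2) = q*q^(t+1) := by ring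
        have f2 : q^(t+3+u)+q = q*(q^(t+2+u)+1) := by ring
        rw [f1, f2, Nat.gcd_mul_left]
        have hc : Nat.Coprime (q^(t+1)) (q^(t+2+u)+1) := by
          have : q^(t+2+u)+1 = q^(t+1+u)*q+1 := by ring
          rw [this]
          exact Nat.Coprime.pow_left _ (wcop q _ hq2)
        rw [hc, mul_one]
      exact hg ▸ Nat.dvd_gcd h1 h3
    · apply Finset.dvd_gcd
      intro i hi
      rw [hIcc] at hi
      fin_cases hi
      · rw [ha1]; exact ⟨q^(t+1), by ring⟩
      · rw [ha2]; exact ⟨q^(t+1+u)+q^t, by ring⟩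
      · rw [ha3]; exact ⟨q^(t+2+u)+1, by ring⟩
  -- the semigroup
  have hSS : seqSemigroup a 4 = wS q t u := by
    rw [seqSemigroup, hd4]
    congr 1
    have hIcc : Set.Icc (1:ℕ) 4 = {1, 2, 3, 4} := by
      ext x; simp [Set.mem_Icc]; omega
    rw [hIcc]
    simp only [Set.image_insert_eq, Set.image_singleton, Nat.div_one, ha1, ha2, ha3, ha4]
    rfl
  have hone : 1 ≤ q^(t+1) := hqt1p
  constructor
  · -- telescopic
    refine ⟨?_, hd4, ?_⟩
    · intro i h1 h4
      interval_cases i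
      · rw [ha1]; positivity
      · rw [ha2]; positivity
      · rw [ha3]; positivity
      · rw [ha4]; positivity
    · intro i hi1 hi4
      interval_cases i
      · -- i = 2
        show a 2 / seqGcd a 2 ∈ seqSemigroup a 1
        rw [seqSemigroup, Set.Icc_self, Set.image_singleton, hd1, ha1,
          Nat.div_self (Nat.pow_pos hqp)]
        rw [AddSubmonoid.mem_closure_singleton]
        exact ⟨a 2 / seqGcd a 2, by simp⟩
      · -- i = 3
        show a 3 / seqGcd a 3 ∈ seqSemigroup a 2
        have hIcc : Set.Icc (1:ℕ) 2 = {1, 2} := by ext x; simp [Set.mem_Icc]; omega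
        rw [seqSemigroup, hIcc, hd2, Set.image_insert_eq, Set.image_singleton]
        have hv1 : a 1 / q^(t+1) = q := by
          rw [ha1]
          have : q^(t+2) = q^(t+1)*q := by ring
          rw [this, Nat.mul_div_cancel_left _ hqt1p]
        have hv2 : a 2 / q^(t+1) = q^(u+1)+1 := by
          rw [ha2]
          have : q^(t+2+u)+q^(t+1) = q^(t+1)*(q^(u+1)+1) := by ring
          rw [this, Nat.mul_div_cancel_left _ hqt1p]
        have hv3 : a 3 / seqGcd a 3 = q^(t+2+u)+1 := by
          rw [hd3, ha3]
          have : q^(t+3+u)+q = q*(q^(t+2+u)+1) := by ring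
          rw [this, Nat.mul_div_cancel_left _ hqp]
        rw [hv1, hv2, hv3]
        have hid : q^(t+2+u)+1 = (q^u*(q^(t+1)-1))*q + (q^(u+1)+1) := by
          zify [hone]; ring
        rw [hid]
        exact add_mem (mul_mem_closure (by left; rfl) _)
          (AddSubmonoid.subset_closure (by right; rfl))
      · -- i = 4
        show a 4 / seqGcd a 4 ∈ seqSemigroup a 3
        have hIcc : Set.Icc (1:ℕ) 3 = {1, 2, 3} := by ext x; simp [Set.mem_Icc]; omega
        rw [seqSemigroup, hIcc, hd3, Set.image_insert_eq, Set.image_insert_eq,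
          Set.image_singleton]
        have hv1 : a 1 / q = q^(t+1) := by
          rw [ha1]
          have : q^(t+2) = q*q^(t+1) := by ring
          rw [this, Nat.mul_div_cancel_left _ hqp]
        have hv2 : a 2 / q = q^(t+1+u)+q^t := by
          rw [ha2]
          have : q^(t+2+u)+q^(t+1) = q*(q^(t+1+u)+q^t) := by ring
          rw [this, Nat.mul_div_cancel_left _ hqp]
        have hv3 : a 3 / q = q^(t+2+u)+1 := by
          rw [ha3]
          have : q^(t+3+u)+q = q*(q^(t+2+u)+1) := by ring
          rw [this, Nat.mul_div_cancel_left _ hqp]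
        have hv4 : a 4 / seqGcd a 4 = q^(2*t+u+3)+1 := by
          rw [hd4, Nat.div_one, ha4]
        rw [hv1, hv2, hv3, hv4]
        have hid : q^(2*t+u+3)+1 = (q^(u+1)*(q^(t+1)-1))*q^(t+1) + (q^(t+2+u)+1) := by
          zify [hone]; ring
        rw [hid]
        exact add_mem (mul_mem_closure (by left; rfl) _)
          (AddSubmonoid.subset_closure (by right; right; rfl))
  · -- genus and Frobenius
    obtain ⟨F, hub, hFnot, hcount, hF1⟩ := wS_main q t u hq2
    rw [hSS]
    refine ⟨hcount, F, ⟨hFnot, ?_⟩, by omega⟩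
    intro x hx
    exact hub x hx
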